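/- Let G be an inverse semigroup, H' ⊆ G a finite sub-inverse semigroup, and A a G-algebra. The relation on G_H defined by g ≡ h if and only if there exists t ∈ H with g·t = h is an equivalence relation on G_H. -/

import Mathlib

/-! Common setup: inverse semigroups, G-algebras, and the universal *-algebra 𝔽(G,A). -/

noncomputable section

/-- An inverse semigroup: a semigroup in which every element `g` has a unique
generalized inverse, denoted `star g`. -/
class InverseSemigroup (G : Type*) extends Semigroup G, Star G where
  mul_star_mul_self : ∀ g : G, g * star g * g = g
  star_mul_self_mul_star : ∀ g : G, star g * g * star g = star g
  star_unique : ∀ g h : G, g * h * g = g → h * g * h = h → h = star g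

namespace Green

/-! ### The free complex *-algebra on a set of generators

The free complex *-algebra on a set `Y` is realized as the monoid algebra of the free
monoid on the letters `Y × Bool` (a generator together with a formal star flag); its star
operation conjugates coefficients, reverses words and flips the star flags. -/

/-- The free complex *-algebra on the set `Y`. -/
abbrev FreeStar (Y : Type*) := MonoidAlgebra ℂ (FreeMonoid (Y × Bool))

namespace FreeStar

variable {Y : Type*}

/-- Star of a word: reverse it and flip all star flags. -/
def wordStar (w : FreeMonoid (Y × Bool)) : FreeMonoid (Y × Bool) :=
  FreeMonoid.ofList (((FreeMonoid.toList w).map fun x => (x.1, !x.2)).reverse)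

lemma wordStar_mul (v w : FreeMonoid (Y × Bool)) :
    wordStar (v * w) = wordStar w * wordStar v := by
  simp [wordStar, FreeMonoid.toList_mul]

lemma wordStar_wordStar (w : FreeMonoid (Y × Bool)) : wordStar (wordStar w) = w := by
  simp [wordStar, List.map_reverse, List.map_map, Function.comp_def]

/-- The star operation on the free complex *-algebra, as an additive map. -/
def starAux : FreeStar Y →+ FreeStar Y :=
  MonoidAlgebra.coeffAddEquiv.symm.toAddMonoidHom.comp
    (((Finsupp.mapDomain.addMonoidHom wordStar).comp
      (Finsupp.mapRange.addMonoidHom (starRingEnd ℂ).toAddMonoidHom)).comp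
      MonoidAlgebra.coeffAddEquiv.toAddMonoidHom)

lemma starAux_apply (f : FreeStar Y) :
    starAux f = MonoidAlgebra.ofCoeff
      (Finsupp.mapDomain wordStar (Finsupp.mapRange (starRingEnd ℂ) (map_zero _) f.coeff)) :=
  rfl

lemma starAux_single (w : FreeMonoid (Y × Bool)) (c : ℂ) :
    starAux (MonoidAlgebra.single w c) = MonoidAlgebra.single (wordStar w) (starRingEnd ℂ c) := by
  rw [starAux_apply]
  simp only [MonoidAlgebra.single, MonoidAlgebra.coeff_ofCoeff, Finsupp.mapRange_single,
    Finsupp.mapDomain_single]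

instance instStarRing : StarRing (FreeStar Y) where
  star := starAux
  star_involutive := by
    intro f
    induction f using MonoidAlgebra.induction_linear with
    | zero => simp
    | add f g hf hg => simp_all [map_add]
    | single w c => simp [starAux_single, wordStar_wordStar, starRingEnd_self_apply]
  star_mul := by
    intro f g
    show starAux (f * g) = starAux g * starAux f
    induction f using MonoidAlgebra.induction_linear with
    | zero => simp
    | add f f' hf hf' => simp [mul_add, add_mul, map_add, hf, hf']
    | single w c =>
      induction g using MonoidAlgebra.induction_linear with
      | zero => simp
      | add g g' hg hg' => simp [mul_add, add_mul, map_add, hg, hg']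
      | single v d =>
        simp only [MonoidAlgebra.single_mul_single, starAux_single, wordStar_mul, map_mul]
        rw [mul_comm]
  star_add := map_add _

end FreeStar

section GAlgebra

variable {G : Type*} [InverseSemigroup G]
variable {A : Type*} [NonUnitalNormedRing A] [StarRing A] [CStarRing A] [NormedSpace ℂ A]
  [IsScalarTower ℂ A A] [SMulCommClass ℂ A A] [StarModule ℂ A] [CompleteSpace A]

/-- `α` is an action of the inverse semigroup `G` on the C*-algebra `A` making it a
`G`-algebra: a semigroup homomorphism `G → End(A)` into the *-endomorphisms of `A` such
that `g g*(a)·b = a·g g*(b)` for all `a b : A` and `g : G`. -/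
structure IsGAlgebra (α : G → A →⋆ₙₐ[ℂ] A) : Prop where
  map_mul : ∀ g h : G, α (g * h) = (α g).comp (α h)
  central : ∀ (g : G) (a b : A), α (g * star g) a * b = a * α (g * star g) b

variable (α : G → A →⋆ₙₐ[ℂ] A)

/-- The generator of the free *-algebra corresponding to `a ∈ A`. -/
def genA (a : A) : FreeStar (A ⊕ G) := MonoidAlgebra.single (FreeMonoid.of (Sum.inl a, false)) 1

/-- The generator of the free *-algebra corresponding to `g ∈ G`. -/
def genG (g : G) : FreeStar (A ⊕ G) := MonoidAlgebra.single (FreeMonoid.of (Sum.inr g, false)) 1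

/-- The defining relations of `𝔽(G,A)`: the *-algebra relations of `A` are respected, the
multiplication and involution of `G` are respected, and `g(a)·g g* = g·a·g*`,
`[g g*, a] = 0` hold; the relation is moreover closed under `star`, so that the ideal
generated by it is a two-sided *-ideal. -/
inductive Rel : FreeStar (A ⊕ G) → FreeStar (A ⊕ G) → Prop
  | add_A (a b : A) : Rel (genA (G := G) (a + b)) (genA a + genA b)
  | smul_A (c : ℂ) (a : A) : Rel (genA (G := G) (c • a)) (c • genA a)
  | mul_A (a b : A) : Rel (genA (G := G) (a * b)) (genA a * genA b)
  | star_A (a : A) : Rel (genA (G := G) (star a)) (star (genA a))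
  | mul_G (g h : G) : Rel (genG (A := A) (g * h)) (genG g * genG h)
  | star_G (g : G) : Rel (genG (A := A) (star g)) (star (genG g))
  | act (g : G) (a : A) :
      Rel (genA (α g a) * genG g * genG (star g)) (genG g * genA a * genG (star g))
  | comm (g : G) (a : A) :
      Rel (genG g * genG (star g) * genA a) (genA a * genG g * genG (star g))
  | star_cl {x y} : Rel x y → Rel (star x) (star y)

/-- The universal *-algebra `𝔽(G,A)`: the quotient of the free complex *-algebra on the
set `A ⊔ G` by the two-sided *-ideal generated by the defining relations. -/
abbrev F := RingQuot (Rel α)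

instance : StarRing (F α) := RingQuot.starRing _ (fun _ _ h => Rel.star_cl h)

/-- The canonical copy of `a ∈ A` inside `𝔽(G,A)`. -/
def ιA (a : A) : F α := RingQuot.mkAlgHom ℂ (Rel α) (genA a)

/-- The canonical copy of `g ∈ G` inside `𝔽(G,A)`. -/
def ιG (g : G) : F α := RingQuot.mkAlgHom ℂ (Rel α) (genG g)

/-- The element `e₀(1-e₁)⋯(1-eₙ)` of `𝔽(G,A)` (product expanded multiplicatively),
given `e₀` and the list `[e₁, …, eₙ]`. -/
def elemP (e₀ : G) (l : List G) : F α :=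
  l.foldl (fun p e => p - p * ιG α e) (ιG α e₀)

/-- The element `g·e₀(1-e₁)⋯(1-eₙ)` of `𝔽(G,A)`. -/
def elemGE (g e₀ : G) (l : List G) : F α := ιG α g * elemP α e₀ l

/-- The set `E(G)` of projections `e₀(1-e₁)⋯(1-eₙ)` in `𝔽(G,A)`, with `e₀, …, eₙ`
idempotents of `G`. -/
def EG : Set (F α) :=
  {x | ∃ (e₀ : G) (l : List G), e₀ * e₀ = e₀ ∧ (∀ e ∈ l, e * e = e) ∧ x = elemP α e₀ l}

/-- The inverse semigroup `G_E = {g·p | g ∈ G, p ∈ E(G)}` inside `𝔽(G,A)`. -/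
def GE : Set (F α) :=
  {x | ∃ (g e₀ : G) (l : List G),
    e₀ * e₀ = e₀ ∧ (∀ e ∈ l, e * e = e) ∧ x = elemGE α g e₀ l}

/-- The extension of the `G`-action along a list: `(id - α e₁)∘⋯∘(id - α eₙ)`. -/
def actL : List G → A → A
  | [] => id
  | e :: l => fun a => actL l a - α e (actL l a)

/-- The extension of the `G`-action to `E(G)`:
`α_{e₀(1-e₁)⋯(1-eₙ)} = α_{e₀}∘(id - α_{e₁})∘⋯∘(id - α_{eₙ})`. -/
def actP (e₀ : G) (l : List G) : A → A := fun a => α e₀ (actL α l a)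

/-- The extension of the `G`-action to `G_E`: `α_{g·p} = α_g ∘ α_p`. -/
def actGE (g e₀ : G) (l : List G) : A → A := fun a => α g (actP α e₀ l a)

/-- The action of `k* = (g·e₀(1-e₁)⋯(1-eₙ))* = g*·(g e₀ g*)(1 - g e₁ g*)⋯(1 - g eₙ g*)`,
for `k = g·e₀(1-e₁)⋯(1-eₙ) ∈ G_E`. -/
def actStar (g e₀ : G) (l : List G) : A → A :=
  fun a => α (star g) (actP α (g * e₀ * star g) (l.map fun e => g * e * star g) a)

/-- The subalgebra `A_{k k*} = α_{k k*}(A) = (α_k ∘ α_{k*})(A)`,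
for `k = g·e₀(1-e₁)⋯(1-eₙ) ∈ G_E`. -/
def carrier (g e₀ : G) (l : List G) : Set A :=
  Set.range fun a => actGE α g e₀ l (actStar α g e₀ l a)

/-- `S` is a sub-inverse semigroup of `G`: a subset closed under multiplication and
involution. -/
structure IsSubInvSemigroup (S : Set G) : Prop where
  mul_mem : ∀ {a b : G}, a ∈ S → b ∈ S → a * b ∈ S
  star_mem : ∀ {a : G}, a ∈ S → star a ∈ S

variable (S : Set G)

/-- The set `E(H')` of projections `e₀(1-e₁)⋯(1-eₙ)` with `e₀, …, eₙ` idempotents of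
`H' = S`. -/
def EH : Set (F α) :=
  {x | ∃ (e₀ : G) (l : List G), (e₀ ∈ S ∧ e₀ * e₀ = e₀) ∧ (∀ e ∈ l, e ∈ S ∧ e * e = e) ∧
    x = elemP α e₀ l}

/-- `H⁽⁰⁾`: the set of nonzero minimal projections of `E(H')`
(where `q ≤ p` means `q p = q`). -/
def H0 : Set (F α) :=
  {p | p ∈ EH α S ∧ p ≠ 0 ∧ ∀ q ∈ EH α S, q ≠ 0 → q * p = q → q = p}

/-- The groupoid `H = {t·e | t ∈ H', e ∈ H⁽⁰⁾} \ {0}` associated to `H'`. -/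
def Hgpd : Set (F α) :=
  {x | x ≠ 0 ∧ ∃ t ∈ S, ∃ e ∈ H0 α S, x = ιG α t * e}

/-- `G_H = {g·e | g ∈ G, e ∈ H⁽⁰⁾, g* g ≥ e} \ {0}`. -/
def GH : Set (F α) :=
  {x | x ≠ 0 ∧ ∃ (g : G), ∃ e ∈ H0 α S, x = ιG α g * e ∧ e * ιG α (star g * g) = e}

/-- The relation `≡` on `G_H`: `g ≡ h` iff `g t = h` for some `t ∈ H`. -/
def equivH (x y : F α) : Prop := ∃ t ∈ Hgpd α S, x * t = y

end GAlgebra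

/-- For an assertion `P`, the scalar `[P]` which is `1` if `P` is true and `0` if `P`
is false. -/
def ind (P : Prop) : ℂ := @ite _ P (Classical.propDecidable P) 1 0

end Green

namespace Green

section GreenAuxG

variable {G : Type*} [InverseSemigroup G]

lemma gsg (g : G) : g * star g * g = g := InverseSemigroup.mul_star_mul_self g
lemma sgs (g : G) : star g * g * star g = star g := InverseSemigroup.star_mul_self_mul_star g

lemma aux1 (g : G) : g * (star g * g) = g := by rw [← mul_assoc, gsg]
lemma aux2 (g : G) : star g * (g * star g) = star g := by rw [← mul_assoc, sgs]

lemma sstar (g : G) : star (star g) = g :=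
  (InverseSemigroup.star_unique (star g) g (sgs g) (gsg g)).symm

lemma idem_sg (g : G) : (star g * g) * (star g * g) = star g * g := by
  rw [mul_assoc, aux1]

lemma idem_gs (g : G) : (g * star g) * (g * star g) = g * star g := by
  rw [mul_assoc, aux2]

lemma la {e : G} (he : e * e = e) (x : G) : e * (e * x) = e * x := by
  rw [← mul_assoc, he]

lemma invb (g x : G) : star g * (g * (star g * x)) = star g * x := by
  rw [← mul_assoc, ← mul_assoc, sgs]

lemma idem_star {e : G} (he : e * e = e) : star e = e := by
  refine (InverseSemigroup.star_unique e e ?_ ?_).symm <;> rw [he, he]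

lemma idem_mul {e f : G} (he : e * e = e) (hf : f * f = f) :
    (e * f) * (e * f) = e * f := by
  have s1 : (e * f) * (f * (star (e * f) * e)) * (e * f) = e * f := by
    simp only [mul_assoc]
    rw [la he, la hf, ← mul_assoc e f, aux1]
  have s2 : (f * (star (e * f) * e)) * (e * f) * (f * (star (e * f) * e))
      = f * (star (e * f) * e) := by
    simp only [mul_assoc]
    rw [la he, la hf, ← mul_assoc e f, invb]
  have h2 : f * (star (e * f) * e) = star (e * f) :=
    InverseSemigroup.star_unique _ _ s1 s2
  have s3' : (f * (star (e * f) * e)) * (f * (star (e * f) * e)) = f * (star (e * f) * e) := by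
    simp only [mul_assoc]
    rw [← mul_assoc e f, invb]
  have s3 : star (e * f) * star (e * f) = star (e * f) := by rw [← h2]; exact s3'
  have s4 : star (star (e * f)) = star (e * f) := by
    refine (InverseSemigroup.star_unique _ _ ?_ ?_).symm <;> rw [s3, s3]
  have h5 : e * f = star (e * f) := by rw [← s4, sstar]
  rw [h5]; exact s3

lemma idem_comm {e f : G} (he : e * e = e) (hf : f * f = f) : e * f = f * e := by
  have hef := idem_mul he hf
  have hfe := idem_mul hf he
  have hself : star (e * f) = e * f := idem_star hef
  have u1 : (e * f) * (f * e) * (e * f) = e * f := by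
    simp only [mul_assoc]
    rw [la he, la hf, ← mul_assoc e f, hef]
  have u2 : (f * e) * (e * f) * (f * e) = f * e := by
    simp only [mul_assoc]
    rw [la he, la hf, ← mul_assoc f e, hfe]
  have h := InverseSemigroup.star_unique (e * f) (f * e) u1 u2
  rw [h, hself]

lemma idem_conj (u : G) {e : G} (he : e * e = e) :
    (u * e * star u) * (u * e * star u) = u * e * star u := by
  simp only [mul_assoc]
  rw [← mul_assoc (star u) u, ← mul_assoc (star u * u) e,
    idem_comm (idem_sg u) he, mul_assoc e, sgs, la he]

lemma conj_mul (u a b : G) (hb : (star u * u) * b = b) :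
    (u * a * star u) * (u * b * star u) = u * (a * b) * star u := by
  simp only [mul_assoc]
  rw [← mul_assoc (star u) u, ← mul_assoc (star u * u) b, hb]

lemma absorb_left {u a e : G} (ha : a * a = a) (hca : (star u * u) * a = a) :
    a * ((star u * u) * e) = a * e := by
  rw [← mul_assoc, idem_comm ha (idem_sg u), hca]

end GreenAuxG

section GreenAuxF

variable {G : Type*} [InverseSemigroup G]
variable {A : Type*} [NonUnitalNormedRing A] [StarRing A] [CStarRing A] [NormedSpace ℂ A]
  [IsScalarTower ℂ A A] [SMulCommClass ℂ A A] [StarModule ℂ A] [CompleteSpace A]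
variable (α : G → A →⋆ₙₐ[ℂ] A)

lemma iG_mul (g h : G) : ιG α (g * h) = ιG α g * ιG α h := by
  have h1 : RingQuot.mkAlgHom ℂ (Rel α) (genG (A := A) (g * h))
      = RingQuot.mkAlgHom ℂ (Rel α) (genG g * genG h) :=
    RingQuot.mkAlgHom_rel ℂ (Rel.mul_G g h)
  rw [map_mul] at h1
  exact h1

/-- The product `(1 - ι e₁) ⋯ (1 - ι eₙ)`. -/
def Pl (l : List G) : F α := (l.map fun e => 1 - ιG α e).prod

lemma Pl_nil : Pl α ([] : List G) = 1 := rfl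

lemma Pl_cons (e : G) (l : List G) : Pl α (e :: l) = (1 - ιG α e) * Pl α l := by
  simp [Pl]

lemma Pl_append (l m : List G) : Pl α (l ++ m) = Pl α l * Pl α m := by
  simp [Pl]

lemma foldl_eq (l : List G) : ∀ x : F α,
    l.foldl (fun p e => p - p * ιG α e) x = x * Pl α l := by
  induction l with
  | nil => intro x; simp [Pl]
  | cons e l ih =>
    intro x
    rw [List.foldl_cons, ih, Pl_cons, ← mul_assoc, mul_sub, mul_one]

lemma elemP_eq (a : G) (l : List G) : elemP α a l = ιG α a * Pl α l := foldl_eq α l _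

lemma iG_comm {e f : G} (h : e * f = f * e) : Commute (ιG α e) (ιG α f) := by
  unfold Commute SemiconjBy
  rw [← iG_mul, ← iG_mul, h]

lemma commute_iG_Pl {f : G} (hf : f * f = f) {l : List G} (hl : ∀ e ∈ l, e * e = e) :
    Commute (ιG α f) (Pl α l) := by
  apply Commute.list_prod_right
  intro x hx
  simp only [List.mem_map] at hx
  obtain ⟨e, hel, rfl⟩ := hx
  exact (Commute.one_right _).sub_right (iG_comm α (idem_comm hf (hl e hel)))

lemma commute_Pl_Pl {l m : List G} (hl : ∀ e ∈ l, e * e = e) (hm : ∀ e ∈ m, e * e = e) :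
    Commute (Pl α l) (Pl α m) := by
  apply Commute.list_prod_left
  intro x hx
  simp only [List.mem_map] at hx
  obtain ⟨e, hel, rfl⟩ := hx
  exact (Commute.one_left _).sub_left (commute_iG_Pl α (hl e hel) hm)

lemma Pl_idem : ∀ l : List G, (∀ e ∈ l, e * e = e) → Pl α l * Pl α l = Pl α l
  | [], _ => by simp [Pl]
  | e :: l, hl => by
    have he := hl e (List.mem_cons_self)
    have hl' : ∀ x ∈ l, x * x = x := fun x hx => hl x (List.mem_cons_of_mem _ hx)
    have hsq : (1 - ιG α e) * (1 - ιG α e) = 1 - ιG α e := by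
      have h1 : ιG α e * ιG α e = ιG α e := by rw [← iG_mul, he]
      rw [mul_sub, mul_one, sub_mul, one_mul, h1, sub_self, sub_zero]
    have hPy : Commute (Pl α l) (1 - ιG α e) :=
      (Commute.one_right _).sub_right (commute_iG_Pl α he hl').symm
    rw [Pl_cons, hPy.mul_mul_mul_comm, hsq, Pl_idem l hl']

lemma elemP_mul {a b : G} {l m : List G} (hb : b * b = b)
    (hl : ∀ e ∈ l, e * e = e) :
    elemP α a l * elemP α b m = elemP α (a * b) (l ++ m) := by
  rw [elemP_eq, elemP_eq, elemP_eq, Pl_append, iG_mul]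
  rw [(commute_iG_Pl α hb hl).symm.mul_mul_mul_comm]

lemma elemP_comm {a b : G} {l m : List G} (ha : a * a = a) (hb : b * b = b)
    (hl : ∀ e ∈ l, e * e = e) (hm : ∀ e ∈ m, e * e = e) :
    elemP α a l * elemP α b m = elemP α b m * elemP α a l := by
  rw [elemP_mul α hb hl, elemP_mul α ha hm, idem_comm hb ha,
    elemP_eq, elemP_eq, Pl_append, Pl_append, (commute_Pl_Pl α hm hl).eq]

lemma elemP_idem {a : G} {l : List G} (ha : a * a = a) (hl : ∀ e ∈ l, e * e = e) :
    elemP α a l * elemP α a l = elemP α a l := by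
  rw [elemP_mul α ha hl, ha, elemP_eq, elemP_eq, Pl_append, Pl_idem α l hl]

lemma iG_mul_elemP (f a : G) (l : List G) :
    ιG α f * elemP α a l = elemP α (f * a) l := by
  rw [elemP_eq, elemP_eq, iG_mul, mul_assoc]

lemma elemP_mul_iG {f a : G} {l : List G} (hf : f * f = f) (hl : ∀ e ∈ l, e * e = e) :
    elemP α a l * ιG α f = elemP α (a * f) l := by
  rw [elemP_eq, elemP_eq, iG_mul, mul_assoc, ← (commute_iG_Pl α hf hl).eq, ← mul_assoc]

lemma conj_aux (u : G) : ∀ (l : List G), (∀ e ∈ l, e * e = e) →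
    ∀ a : G, a * a = a → (star u * u) * a = a →
    ιG α u * (ιG α a * Pl α l) * ιG α (star u)
      = ιG α (u * a * star u) * Pl α (l.map fun e => u * ((star u * u) * e) * star u)
  | [], _, a, ha, hca => by
    simp only [Pl, List.map_nil, List.prod_nil, mul_one]
    rw [← iG_mul, ← iG_mul]
  | e :: l, hl, a, ha, hca => by
    have he : e * e = e := hl e (List.mem_cons_self)
    have hl' : ∀ x ∈ l, x * x = x := fun x hx => hl x (List.mem_cons_of_mem _ hx)
    have hce : ((star u * u) * e) * ((star u * u) * e) = (star u * u) * e :=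
      idem_mul (idem_sg u) he
    have ha' : (a * ((star u * u) * e)) * (a * ((star u * u) * e)) = a * ((star u * u) * e) :=
      idem_mul ha hce
    have hca' : (star u * u) * (a * ((star u * u) * e)) = a * ((star u * u) * e) := by
      rw [← mul_assoc, hca]
    have key : ιG α a * Pl α (e :: l)
        = ιG α a * Pl α l - ιG α (a * ((star u * u) * e)) * Pl α l := by
      rw [Pl_cons, ← mul_assoc, mul_sub, mul_one, sub_mul, ← iG_mul, ← absorb_left ha hca]
    rw [key, mul_sub, sub_mul, conj_aux u l hl' a ha hca, conj_aux u l hl' _ ha' hca',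
      List.map_cons, Pl_cons, sub_mul, one_mul, mul_sub,
      ← mul_assoc (ιG α (u * a * star u)) (ιG α (u * ((star u * u) * e) * star u)),
      ← iG_mul, conj_mul u a _ (la (idem_sg u) e)]

lemma conj_elemP {u a : G} {l : List G} (ha : a * a = a) (hca : (star u * u) * a = a)
    (hl : ∀ e ∈ l, e * e = e) :
    ιG α u * elemP α a l * ιG α (star u)
      = elemP α (u * a * star u) (l.map fun e => u * ((star u * u) * e) * star u) := by
  rw [elemP_eq, elemP_eq]
  exact conj_aux α u l hl a ha hca

variable (S : Set G)

lemma EH_mul {p q : F α} (hS : IsSubInvSemigroup S) (hp : p ∈ EH α S) (hq : q ∈ EH α S) :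
    p * q ∈ EH α S := by
  obtain ⟨a, l, ⟨haS, ha⟩, hl, rfl⟩ := hp
  obtain ⟨b, m, ⟨hbS, hb⟩, hm, rfl⟩ := hq
  exact ⟨a * b, l ++ m, ⟨hS.mul_mem haS hbS, idem_mul ha hb⟩,
    fun e he => (List.mem_append.mp he).elim (hl e) (hm e),
    elemP_mul α hb (fun e he => (hl e he).2)⟩

lemma EH_comm {p q : F α} (hp : p ∈ EH α S) (hq : q ∈ EH α S) : p * q = q * p := by
  obtain ⟨a, l, ⟨_, ha⟩, hl, rfl⟩ := hp
  obtain ⟨b, m, ⟨_, hb⟩, hm, rfl⟩ := hq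
  exact elemP_comm α ha hb (fun e he => (hl e he).2) (fun e he => (hm e he).2)

lemma EH_idem {p : F α} (hp : p ∈ EH α S) : p * p = p := by
  obtain ⟨a, l, ⟨_, ha⟩, hl, rfl⟩ := hp
  exact elemP_idem α ha (fun e he => (hl e he).2)

lemma EH_comm_iG {p : F α} (hp : p ∈ EH α S) {f : G} (hf : f * f = f) :
    ιG α f * p = p * ιG α f := by
  obtain ⟨a, l, ⟨_, ha⟩, hl, rfl⟩ := hp
  rw [iG_mul_elemP, elemP_mul_iG α hf (fun e he => (hl e he).2), idem_comm hf ha]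

lemma EH_conj {p : F α} (hS : IsSubInvSemigroup S) (hp : p ∈ EH α S) {u : G} (huS : u ∈ S) :
    ιG α u * p * ιG α (star u) ∈ EH α S := by
  obtain ⟨a, l, ⟨haS, ha⟩, hl, rfl⟩ := hp
  have hstep : ιG α u * elemP α a l = ιG α u * elemP α ((star u * u) * a) l := by
    rw [← iG_mul_elemP, ← mul_assoc, ← iG_mul, aux1]
  refine ⟨u * ((star u * u) * a) * star u,
    l.map fun e => u * ((star u * u) * e) * star u,
    ⟨hS.mul_mem (hS.mul_mem huS (hS.mul_mem (hS.mul_mem (hS.star_mem huS) huS) haS))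
      (hS.star_mem huS), idem_conj u (idem_mul (idem_sg u) ha)⟩, ?_, ?_⟩
  · intro e he
    simp only [List.mem_map] at he
    obtain ⟨e', he', rfl⟩ := he
    exact ⟨hS.mul_mem (hS.mul_mem huS (hS.mul_mem (hS.mul_mem (hS.star_mem huS) huS)
      (hl e' he').1)) (hS.star_mem huS), idem_conj u (idem_mul (idem_sg u) (hl e' he').2)⟩
  · rw [hstep, conj_elemP α (idem_mul (idem_sg u) ha) (la (idem_sg u) a)
      (fun e he => (hl e he).2)]

end GreenAuxF

section GreenMain

variable {G : Type*} [InverseSemigroup G]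
variable {A : Type*} [NonUnitalNormedRing A] [StarRing A] [CStarRing A] [NormedSpace ℂ A]
  [IsScalarTower ℂ A A] [SMulCommClass ℂ A A] [StarModule ℂ A] [CompleteSpace A]
variable (α : G → A →⋆ₙₐ[ℂ] A) (S : Set G)

lemma equivH_refl {x : F α} (hx : x ∈ GH α S) : equivH α S x x := by
  obtain ⟨hx0, g, e, ⟨heEH, he0, hemin⟩, rfl, hge⟩ := hx
  obtain ⟨a, l, ⟨haS, ha⟩, hl, rfl⟩ := heEH
  have hlidem : ∀ e ∈ l, e * e = e := fun e he => (hl e he).2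
  refine ⟨elemP α a l, ⟨he0, a, haS, elemP α a l,
    ⟨⟨a, l, ⟨haS, ha⟩, hl, rfl⟩, he0, hemin⟩, ?_⟩, ?_⟩
  · rw [iG_mul_elemP, ha]
  · rw [mul_assoc, elemP_idem α ha hlidem]

lemma equivH_symm (hS : IsSubInvSemigroup S) {x y : F α} (hx : x ∈ GH α S)
    (hy : y ∈ GH α S) (h : equivH α S x y) : equivH α S y x := by
  obtain ⟨t, ⟨ht0, u, huS, e', ⟨heEH', he0', hemin'⟩, rfl⟩, hxt⟩ := h
  obtain ⟨hx0, g, e, ⟨heEH, he0, hemin⟩, rfl, hge⟩ := hx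
  obtain ⟨hy0, -⟩ := hy
  set r := ιG α u * e' * ιG α (star u) with hr
  have hrEH : r ∈ EH α S := EH_conj α S hS heEH' huS
  have F1 : ιG α (star u) * r = e' * ιG α (star u) := by
    rw [hr, ← mul_assoc, ← mul_assoc, ← iG_mul,
      EH_comm_iG α S heEH' (idem_sg u), mul_assoc, ← iG_mul, sgs]
  have F2 : r * (ιG α u * e') = ιG α u * e' := by
    rw [hr, mul_assoc, ← mul_assoc (ιG α (star u)), ← iG_mul,
      EH_comm_iG α S heEH' (idem_sg u), ← mul_assoc, mul_assoc (ιG α u) e' e',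
      EH_idem α S heEH', mul_assoc, ← EH_comm_iG α S heEH' (idem_sg u),
      ← mul_assoc, ← iG_mul, aux1]
  set q := e * r with hqdef
  have hqEH : q ∈ EH α S := EH_mul α S hS heEH hrEH
  have step1 : (ιG α g * q) * (ιG α u * e') = y := by
    rw [hqdef, mul_assoc, mul_assoc e r, F2, ← mul_assoc, hxt]
  have hq0 : q ≠ 0 := by
    intro h
    apply hy0
    rw [← step1, h, mul_zero, zero_mul]
  have hqe : q * e = q := by
    rw [hqdef, mul_assoc, EH_comm α S hrEH heEH, ← mul_assoc, EH_idem α S heEH]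
  have hqe2 : q = e := hemin q hqEH hq0 hqe
  have F3 : (ιG α u * e') * (ιG α (star u) * r) = r := by
    rw [F1, ← mul_assoc, mul_assoc (ιG α u) e' e', EH_idem α S heEH', hr]
  have hyx : y * (ιG α (star u) * r) = ιG α g * e := by
    rw [← hxt, mul_assoc, F3, mul_assoc, ← hqdef, hqe2]
  have hr0 : r ≠ 0 := by
    intro h
    apply he0
    rw [← hqe2, hqdef, h, mul_zero]
  have hs0 : ιG α (star u) * r ≠ 0 := by
    intro h
    apply hx0
    rw [← hyx, h, mul_zero]
  have hrt2 : r * ιG α u = ιG α u * e' := by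
    rw [hr, mul_assoc, ← iG_mul, mul_assoc, ← EH_comm_iG α S heEH' (idem_sg u),
      ← mul_assoc, ← iG_mul, aux1]
  have hrmin : ∀ q' ∈ EH α S, q' ≠ 0 → q' * r = q' → q' = r := by
    intro q' hq'EH hq'0 hq'r
    have hru : r * ιG α (u * star u) = r := by
      rw [hr, mul_assoc, ← iG_mul, aux2]
    have F4 : q' * ιG α (u * star u) = q' := by
      conv_lhs => rw [← hq'r]
      rw [mul_assoc, hru, hq'r]
    have hq''EH : ιG α (star u) * q' * ιG α u ∈ EH α S := by
      have h := EH_conj α S hS hq'EH (hS.star_mem huS)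
      rwa [sstar] at h
    have A : (ιG α (star u) * q') * ιG α u = ((ιG α (star u) * q') * ιG α u) * e' := by
      conv_lhs => rw [← hq'r]
      rw [← mul_assoc, mul_assoc (ιG α (star u) * q') r (ιG α u), hrt2, ← mul_assoc]
    have B : ιG α u * ((ιG α (star u) * q') * ιG α u) * ιG α (star u) = q' := by
      rw [← mul_assoc, ← mul_assoc, ← iG_mul, EH_comm_iG α S hq'EH (idem_gs u),
        mul_assoc q' (ιG α (u * star u)) (ιG α u), ← iG_mul, gsg, mul_assoc,
        ← iG_mul, F4]
    have hq''0 : (ιG α (star u) * q') * ιG α u ≠ 0 := by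
      intro h
      apply hq'0
      rw [← B, h, mul_zero, zero_mul]
    have hq''e : (ιG α (star u) * q') * ιG α u = e' :=
      hemin' _ hq''EH hq''0 A.symm
    rw [hq''e] at B
    rw [← hr] at B
    exact B.symm
  exact ⟨ιG α (star u) * r, ⟨hs0, star u, hS.star_mem huS, r, ⟨hrEH, hr0, hrmin⟩, rfl⟩, hyx⟩

lemma equivH_trans (hS : IsSubInvSemigroup S) {x y z : F α} (hz : z ∈ GH α S)
    (h : equivH α S x y) (h' : equivH α S y z) : equivH α S x z := by
  obtain ⟨t, ⟨ht0, u, huS, e', ⟨heEH', he0', hemin'⟩, rfl⟩, hxt⟩ := h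
  obtain ⟨t', ⟨ht'0, v, hvS, f', ⟨hfEH', hf0', hfmin'⟩, rfl⟩, hyt'⟩ := h'
  obtain ⟨hz0, -⟩ := hz
  have hcEH : ιG α (star v) * e' * ιG α v ∈ EH α S := by
    have h := EH_conj α S hS heEH' (hS.star_mem hvS)
    rwa [sstar] at h
  have G1 : e' * ιG α v = ιG α v * (ιG α (star v) * e' * ιG α v) := by
    rw [← mul_assoc, ← mul_assoc, ← iG_mul, EH_comm_iG α S heEH' (idem_gs v),
      mul_assoc, ← iG_mul, gsg]
  have hst : (ιG α u * e') * (ιG α v * f')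
      = ιG α (u * v) * ((ιG α (star v) * e' * ιG α v) * f') := by
    rw [mul_assoc, ← mul_assoc e' (ιG α v) f', G1, mul_assoc (ιG α v),
      ← mul_assoc, ← iG_mul]
  have hxz : x * ((ιG α u * e') * (ιG α v * f')) = z := by
    rw [← mul_assoc, hxt, hyt']
  have hcf0 : (ιG α (star v) * e' * ιG α v) * f' ≠ 0 := by
    intro h
    apply hz0
    rw [← hxz, hst, h, mul_zero, mul_zero]
  have hcf : (ιG α (star v) * e' * ιG α v) * f' = f' :=
    hfmin' _ (EH_mul α S hS hcEH hfEH') hcf0 (by rw [mul_assoc, EH_idem α S hfEH'])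
  exact ⟨(ιG α u * e') * (ιG α v * f'),
    ⟨fun h => hz0 (by rw [← hxz, h, mul_zero]), u * v, hS.mul_mem huS hvS, f',
      ⟨hfEH', hf0', hfmin'⟩, by rw [hst, hcf]⟩, hxz⟩

end GreenMain

/-- Let `G` be an inverse semigroup, `H' = S ⊆ G` a finite sub-inverse
semigroup and `A` a `G`-algebra.  The relation on `G_H` defined by `g ≡ h` iff there
exists `t ∈ H` with `g·t = h` is an equivalence relation on `G_H`. -/
theorem equivH_is_equivalence
    {G : Type*} [InverseSemigroup G]
    {A : Type*} [NonUnitalNormedRing A] [StarRing A] [CStarRing A] [NormedSpace ℂ A]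
    [IsScalarTower ℂ A A] [SMulCommClass ℂ A A] [StarModule ℂ A] [CompleteSpace A]
    (α : G → A →⋆ₙₐ[ℂ] A) (hα : IsGAlgebra α)
    (S : Set G) (hS : IsSubInvSemigroup S) (hSfin : S.Finite) :
    Equivalence (fun x y : {z : F α // z ∈ GH α S} => equivH α S x.1 y.1) := by
  constructor
  · exact fun a => equivH_refl α S a.2
  · exact fun {a b} h => equivH_symm α S hS a.2 b.2 h
  · exact fun {a b c} h h' => equivH_trans α S hS c.2 h h'

end Green
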